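/- Let (X_n) be iid copies of X ~ S_p(μ, Σ, α), 0 < α < 2, with Σ_{ii} > 0, s > 0 fixed, and suppose α̂_n → α almost surely with α̂_n ∈ (0,2). Then (2/s²)·(−log|φ̂_n(s e_i)|)^{2/α̂_n} converges almost surely to Σ_{ii}. -/

import Mathlib

open Matrix MeasureTheory ProbabilityTheory Filter

theorem stmt_17 {Ω : Type*} [MeasurableSpace Ω] (μ : Measure Ω) [IsProbabilityMeasure μ]
    {p : ℕ} (μv : Fin p → ℝ) (S : Matrix (Fin p) (Fin p) ℝ) (hS : S.PosSemidef)
    (α : ℝ) (hα : 0 < α) (hα2 : α < 2)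
    (i : Fin p) (hii : 0 < S i i) (s : ℝ) (hs : 0 < s)
    (X : ℕ → Ω → Fin p → ℝ) (hX : ∀ n, Measurable (X n))
    (hindep : iIndepFun X μ)
    (hident : ∀ n, IdentDistrib (X n) (X 0) μ μ)
    (hφ : ∀ t : Fin p → ℝ,
      (∫ ω, Complex.exp (Complex.I * ((t ⬝ᵥ X 0 ω : ℝ) : ℂ)) ∂μ)
        = Complex.exp (Complex.I * ((t ⬝ᵥ μv : ℝ) : ℂ)
            - ((((1 / 2 : ℝ) * (t ⬝ᵥ S.mulVec t)) ^ (α / 2) : ℝ) : ℂ)))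
    (αhat : ℕ → Ω → ℝ) (hrange : ∀ n ω, αhat n ω ∈ Set.Ioo (0 : ℝ) 2)
    (hαhat : ∀ᵐ ω ∂μ, Tendsto (fun n => αhat n ω) atTop (nhds α)) :
    ∀ᵐ ω ∂μ, Tendsto
      (fun n : ℕ => (2 / s ^ 2) *
        (-Real.log (‖(n : ℂ)⁻¹ * ∑ j ∈ Finset.range n,
            Complex.exp (Complex.I * (((s • (Pi.single i 1 : Fin p → ℝ)) ⬝ᵥ X j ω : ℝ) : ℂ))‖))
          ^ (2 / αhat n ω))
      atTop (nhds (S i i)) := by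
  set t : Fin p → ℝ := s • (Pi.single i 1 : Fin p → ℝ) with ht
  set Y : ℕ → Ω → ℂ := fun n ω => Complex.exp (Complex.I * ((t ⬝ᵥ X n ω : ℝ) : ℂ)) with hY
  have hg : Measurable fun v : Fin p → ℝ => Complex.exp (Complex.I * ((t ⬝ᵥ v : ℝ) : ℂ)) := by
    have h0 : Measurable fun v : Fin p → ℝ => t ⬝ᵥ v := by
      simp only [dotProduct]
      exact Finset.measurable_sum _ fun k _ => measurable_const.mul (measurable_pi_apply k)
    exact Complex.measurable_exp.comp (measurable_const.mul (Complex.measurable_ofReal.comp h0))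
  have hYm : ∀ n, Measurable (Y n) := fun n => hg.comp (hX n)
  have hYnorm : ∀ n ω, ‖Y n ω‖ = 1 := by
    intro n ω
    simp only [hY, Complex.norm_exp]
    simp [Complex.mul_re]
  have hYint : Integrable (Y 0) μ := by
    refine Integrable.mono' (integrable_const 1) (hYm 0).aestronglyMeasurable ?_
    filter_upwards with ω using le_of_eq (hYnorm 0 ω)
  have hYindep : Pairwise (Function.onFun (IndepFun · · μ) Y) := by
    intro m n hmn
    exact (hindep.indepFun hmn).comp hg hg
  have hYident : ∀ n, IdentDistrib (Y n) (Y 0) μ μ := fun n =>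
    (hident n).comp hg
  have hSLLN := strong_law_ae Y hYint hYindep hYident
  -- compute the mean
  set L : ℝ := ((1 / 2 : ℝ) * (s ^ 2 * S i i)) ^ (α / 2) with hL
  have htSt : t ⬝ᵥ S.mulVec t = s ^ 2 * S i i := by
    simp [ht, smul_dotProduct, Matrix.mulVec_smul, dotProduct_smul,
      single_dotProduct, Matrix.mulVec_single, smul_eq_mul]
    ring
  have hmean : (μ[Y 0]) = Complex.exp (Complex.I * ((t ⬝ᵥ μv : ℝ) : ℂ) - (L : ℂ)) := by
    rw [show (μ[Y 0]) = ∫ ω, Complex.exp (Complex.I * ((t ⬝ᵥ X 0 ω : ℝ) : ℂ)) ∂μ from rfl,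
      hφ t, htSt, hL]
  have habs : ‖(μ[Y 0])‖ = Real.exp (-L) := by
    rw [hmean, Complex.norm_exp]
    simp [Complex.sub_re, Complex.mul_re]
  have hLpos : 0 < L := Real.rpow_pos_of_pos (by positivity) _
  filter_upwards [hSLLN, hαhat] with ω hω hαω
  -- |A n| → exp(-L)
  have h1 : Tendsto (fun n : ℕ => ‖(n : ℂ)⁻¹ * ∑ j ∈ Finset.range n, Y j ω‖)
      atTop (nhds (Real.exp (-L))) := by
    rw [← habs]
    refine (continuous_norm.tendsto _).comp (hω.congr fun n => ?_)
    rw [← Complex.ofReal_natCast]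
    push_cast
    rw [Complex.real_smul]
    push_cast
    ring
  have h2 : Tendsto (fun n : ℕ => -Real.log (‖(n : ℂ)⁻¹ * ∑ j ∈ Finset.range n, Y j ω‖))
      atTop (nhds L) := by
    have := ((Real.continuousAt_log (Real.exp_ne_zero _)).tendsto.comp h1).neg
    rwa [Real.log_exp, neg_neg] at this
  have h3 : Tendsto (fun n : ℕ => 2 / αhat n ω) atTop (nhds (2 / α)) :=
    tendsto_const_nhds.div hαω (ne_of_gt hα)
  have h4 : Tendsto (fun n : ℕ =>
      (-Real.log (‖(n : ℂ)⁻¹ * ∑ j ∈ Finset.range n, Y j ω‖)) ^ (2 / αhat n ω))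
      atTop (nhds (L ^ (2 / α))) :=
    h2.rpow h3 (Or.inl (ne_of_gt hLpos))
  have hLval : L ^ (2 / α) = (1 / 2 : ℝ) * (s ^ 2 * S i i) := by
    rw [hL, ← Real.rpow_mul (by positivity)]
    rw [show α / 2 * (2 / α) = 1 by field_simp, Real.rpow_one]
  have h5 := h4.const_mul (2 / s ^ 2)
  rw [hLval] at h5
  have : (2 / s ^ 2) * ((1 / 2 : ℝ) * (s ^ 2 * S i i)) = S i i := by
    field_simp
  rw [this] at h5
  exact h5
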